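/- arXiv:1506.00450 — 2 statements merged into one kernel-verified Lean document; each statement's English description precedes it below -/
import Mathlib

section
/- For a finite set Ω = {z_1,…,z_M} ⊂ ℂ^d, the ideal I(Ω) is generated by the d^M polynomials ∏_{j=1}^M (Z_{ℓ_j} − z_{j,ℓ_j}) over all choices ℓ ∈ {1,…,d}^M. -/
open MvPolynomial

private lemma sub_C_eval_mem (d : ℕ) (x : Fin d → ℂ) (p : MvPolynomial (Fin d) ℂ) :
    p - C (eval x p) ∈
      Ideal.span (Set.range fun i => (X i - C (x i) : MvPolynomial (Fin d) ℂ)) := by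
  induction p using MvPolynomial.induction_on with
  | C a => simp
  | add p q hp hq =>
      have h : p + q - C (eval x (p + q)) =
          (p - C (eval x p)) + (q - C (eval x q)) := by
        rw [eval_add, C_add]; ring
      rw [h]; exact add_mem hp hq
  | mul_X p i hp =>
      have h1 : (X i - C (x i) : MvPolynomial (Fin d) ℂ) ∈
          Ideal.span (Set.range fun i => (X i - C (x i) : MvPolynomial (Fin d) ℂ)) :=
        Ideal.subset_span ⟨i, rfl⟩
      have h : p * X i - C (eval x (p * X i)) =
          p * (X i - C (x i)) + (p - C (eval x p)) * C (x i) := by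
        rw [eval_mul, eval_X, C_mul]; ring
      rw [h]
      exact add_mem (Ideal.mul_mem_left _ _ h1) (Ideal.mul_mem_right _ _ hp)

private lemma vi_single (d : ℕ) (x : Fin d → ℂ) :
    vanishingIdeal ℂ {x} =
      Ideal.span (Set.range fun i => (X i - C (x i) : MvPolynomial (Fin d) ℂ)) := by
  apply le_antisymm
  · intro p hp
    rw [mem_vanishingIdeal_singleton_iff] at hp
    change eval x p = 0 at hp
    simpa [hp] using sub_C_eval_mem d x p
  · rw [Ideal.span_le]
    rintro _ ⟨i, rfl⟩
    rw [SetLike.mem_coe, mem_vanishingIdeal_singleton_iff]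
    simp

private lemma finset_inf_eq_prod {R ι : Type*} [CommRing R] [DecidableEq ι] (s : Finset ι) (I : ι → Ideal R)
    (h : Set.Pairwise ↑s (Function.onFun IsCoprime I)) : (⨅ j ∈ s, I j) = ∏ j ∈ s, I j := by
  induction s using Finset.induction_on with
  | empty => simp
  | @insert a s ha ih =>
      have hcop : IsCoprime (I a) (⨅ j ∈ s, I j) :=
        Ideal.isCoprime_biInf fun j hj =>
          h (Finset.mem_insert_self a s) (Finset.mem_insert_of_mem hj)
            (fun haj => ha (haj ▸ hj))
      rw [Finset.iInf_insert, Ideal.inf_eq_mul_of_isCoprime hcop,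
        ih (h.mono (Finset.coe_subset.mpr (Finset.subset_insert a s))),
        Finset.prod_insert ha]

private lemma prod_step (d M : ℕ) (z : Fin M → Fin d → ℂ)
    (hne : Nonempty (Fin M → Fin d)) (s : Finset (Fin M)) :
    (∏ j ∈ s, Ideal.span (Set.range fun i =>
        (X i - C (z j i) : MvPolynomial (Fin d) ℂ))) =
      Ideal.span (Set.range fun ℓ : Fin M → Fin d =>
        ∏ j ∈ s, (X (ℓ j) - C (z j (ℓ j)) : MvPolynomial (Fin d) ℂ)) := by
  induction s using Finset.induction_on with
  | empty =>
      have h1 : (Set.range fun _ : Fin M → Fin d => (1 : MvPolynomial (Fin d) ℂ)) = {1} :=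
        Set.range_const
      simp [h1]
  | @insert a s ha ih =>
      rw [Finset.prod_insert ha, ih, Ideal.span_mul_span']
      congr 1
      ext p
      simp only [Set.mem_mul, Set.mem_range]
      constructor
      · rintro ⟨_, ⟨i, rfl⟩, _, ⟨ℓ, rfl⟩, rfl⟩
        refine ⟨Function.update ℓ a i, ?_⟩
        rw [Finset.prod_insert ha, Function.update_self]
        congr 1
        exact Finset.prod_congr rfl fun j hj => by
          rw [Function.update_of_ne (ne_of_mem_of_not_mem hj ha)]
      · rintro ⟨ℓ, rfl⟩
        exact ⟨X (ℓ a) - C (z a (ℓ a)), ⟨ℓ a, rfl⟩,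
          ∏ j ∈ s, (X (ℓ j) - C (z j (ℓ j))), ⟨ℓ, rfl⟩,
          (Finset.prod_insert (f := fun j => X (ℓ j) - C (z j (ℓ j))) ha).symm⟩

/-- For pairwise distinct points `z 1, …, z M ∈ ℂ^d`, the vanishing ideal
of `Ω = {z 1, …, z M}` is generated by the `d^M` polynomials
`∏ j, (Z (ℓ j) - z j (ℓ j))` over all choices `ℓ : {1,…,M} → {1,…,d}`. -/
theorem vanishingIdeal_eq_span_products
    (d M : ℕ) (z : Fin M → Fin d → ℂ) (hz : Function.Injective z) :
    MvPolynomial.vanishingIdeal ℂ (Set.range z) =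
      Ideal.span (Set.range fun ℓ : Fin M → Fin d =>
        ∏ j, (MvPolynomial.X (ℓ j) - MvPolynomial.C (z j (ℓ j)))) := by
  by_cases hne : Nonempty (Fin M → Fin d)
  · -- main case
    have hiInf : vanishingIdeal ℂ (Set.range z) = ⨅ j, vanishingIdeal ℂ {z j} := by
      ext p
      simp only [mem_vanishingIdeal_iff, Submodule.mem_iInf,
        Set.mem_singleton_iff, forall_eq, Set.forall_mem_range]
    have hpair : Set.Pairwise ↑(Finset.univ : Finset (Fin M))
        (Function.onFun IsCoprime fun j => Ideal.span (Set.range fun i =>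
          (X i - C (z j i) : MvPolynomial (Fin d) ℂ))) := by
      intro i _ j _ hij
      simp only [Function.onFun, ← vi_single]
      refine (Ideal.isCoprime_iff_sup_eq).mpr
        (Ideal.IsMaximal.coprime_of_ne inferInstance inferInstance ?_)
      intro he
      apply hij
      apply hz
      funext k
      have hk : (X k - C (z i k) : MvPolynomial (Fin d) ℂ) ∈ vanishingIdeal ℂ {z j} := by
        rw [← he, vi_single]
        exact Ideal.subset_span ⟨k, rfl⟩
      rw [mem_vanishingIdeal_singleton_iff] at hk
      change eval (z j) _ = 0 at hk
      simp only [map_sub, eval_X, eval_C, sub_eq_zero] at hk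
      exact hk.symm
    calc vanishingIdeal ℂ (Set.range z)
        = ⨅ j, vanishingIdeal ℂ {z j} := hiInf
      _ = ⨅ j ∈ Finset.univ, Ideal.span (Set.range fun i =>
            (X i - C (z j i) : MvPolynomial (Fin d) ℂ)) := by
            simp [vi_single]
      _ = ∏ j, Ideal.span (Set.range fun i =>
            (X i - C (z j i) : MvPolynomial (Fin d) ℂ)) :=
            finset_inf_eq_prod _ _ hpair
      _ = _ := by
            rw [prod_step d M z hne Finset.univ]
  · -- degenerate: d = 0 and M > 0
    have hde : IsEmpty (Fin M → Fin d) := not_nonempty_iff.mp hne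
    have hM : 0 < M := by
      by_contra h
      exact hne ⟨fun j => absurd j.2 (by omega)⟩
    have hd : d = 0 := by
      by_contra h
      exact hne ⟨fun _ => ⟨0, by omega⟩⟩
    subst hd
    have hsub : Subsingleton (Fin M) := by
      constructor
      intro i j
      exact hz (funext fun k => k.elim0)
    have i0 : Fin M := ⟨0, hM⟩
    have hrange : Set.range z = {z i0} := by
      ext x
      constructor
      · rintro ⟨i, rfl⟩; rw [hsub.elim i i0]; exact rfl
      · rintro rfl; exact ⟨i0, rfl⟩
    rw [hrange, vi_single, Set.range_eq_empty, Set.range_eq_empty]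
end

section
/- Let Ω = {z_1,…,z_M} ⊂ ℂ^d be pairwise distinct points and n ≥ M. Then the ideal generated by the polynomials of max-degree at most n vanishing on Ω equals the full vanishing ideal: ⟨ker 𝒜_n⟩ = I(Ω). -/
/-- For `M` pairwise distinct points `z 1, …, z M ∈ ℂ^d` and `n ≥ M`,
the ideal generated by the polynomials of max-degree at most `n` vanishing on
`Ω = {z 1, …, z M}` equals the full vanishing ideal of `Ω`. -/
theorem span_ker_evaluation_eq_vanishingIdeal
    (d M n : ℕ) (hn : M ≤ n) (z : Fin M → Fin d → ℂ) (hz : Function.Injective z) :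
    Ideal.span {p : MvPolynomial (Fin d) ℂ |
        (∀ i, p.degreeOf i ≤ n) ∧ ∀ j, MvPolynomial.eval (z j) p = 0} =
      MvPolynomial.vanishingIdeal ℂ (Set.range z) := by
  classical
  open MvPolynomial in
  apply le_antisymm
  · rw [Ideal.span_le]
    rintro p ⟨-, hp⟩
    rw [SetLike.mem_coe, MvPolynomial.mem_vanishingIdeal_iff]
    rintro x ⟨j, rfl⟩
    exact hp j
  · -- separating coordinates
    have hsep : ∀ j k : Fin M, j ≠ k → ∃ i, z j i ≠ z k i := by
      intro j k h
      exact Function.ne_iff.mp (fun he => h (hz he))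
    choose idx hidx using hsep
    -- linear factors
    set f : ∀ j k : Fin M, j ≠ k → MvPolynomial (Fin d) ℂ := fun j k h =>
      MvPolynomial.C ((z j (idx j k h) - z k (idx j k h))⁻¹) *
        (MvPolynomial.X (idx j k h) - MvPolynomial.C (z k (idx j k h))) with hf
    set g : Fin M → Fin M → MvPolynomial (Fin d) ℂ := fun j k =>
      if h : j = k then 1 else f j k h with hg
    -- Lagrange interpolation polynomials
    set L : Fin M → MvPolynomial (Fin d) ℂ := fun j =>
      ∏ k ∈ Finset.univ.erase j, g j k with hL
    have hXC : ∀ (i : Fin d) (a : ℂ),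
        (MvPolynomial.X (R := ℂ) i - MvPolynomial.C a).totalDegree ≤ 1 := by
      intro i a
      calc (MvPolynomial.X (R := ℂ) i - MvPolynomial.C a).totalDegree
          = (MvPolynomial.X (R := ℂ) i + MvPolynomial.C (-a)).totalDegree := by
            rw [MvPolynomial.C_neg, sub_eq_add_neg]
        _ ≤ max (MvPolynomial.X (R := ℂ) i).totalDegree
              (MvPolynomial.C (-a) : MvPolynomial (Fin d) ℂ).totalDegree :=
            MvPolynomial.totalDegree_add _ _
        _ ≤ 1 := by
            simp [MvPolynomial.totalDegree_X, MvPolynomial.totalDegree_C]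
    have hgdeg : ∀ j k, (g j k).totalDegree ≤ 1 := by
      intro j k
      rw [hg]
      by_cases h : j = k
      · simp [h]
      · simp only [h, dif_neg, not_false_iff, hf]
        calc (MvPolynomial.C ((z j (idx j k h) - z k (idx j k h))⁻¹) *
              (MvPolynomial.X (idx j k h) - MvPolynomial.C (z k (idx j k h)))).totalDegree
            ≤ (MvPolynomial.C ((z j (idx j k h) - z k (idx j k h))⁻¹) :
                MvPolynomial (Fin d) ℂ).totalDegree +
              (MvPolynomial.X (idx j k h) -
                MvPolynomial.C (z k (idx j k h))).totalDegree :=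
              MvPolynomial.totalDegree_mul _ _
          _ ≤ 0 + 1 := add_le_add (le_of_eq (MvPolynomial.totalDegree_C _)) (hXC _ _)
          _ = 1 := by ring
    have hLdeg : ∀ j, (L j).totalDegree ≤ M - 1 := by
      intro j
      calc (L j).totalDegree ≤ ∑ k ∈ Finset.univ.erase j, (g j k).totalDegree :=
            MvPolynomial.totalDegree_finset_prod _ _
        _ ≤ ∑ _k ∈ Finset.univ.erase j, 1 := Finset.sum_le_sum fun k _ => hgdeg j k
        _ = M - 1 := by
            simp [Finset.card_erase_of_mem]
    -- evaluations
    have hgeval_self : ∀ j k, MvPolynomial.eval (z j) (g j k) = 1 := by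
      intro j k
      rw [hg]
      by_cases h : j = k
      · simp [h]
      · simp only [h, dif_neg, not_false_iff, hf, map_mul, map_sub,
          MvPolynomial.eval_C, MvPolynomial.eval_X, if_neg h]
        rw [inv_mul_cancel₀ (sub_ne_zero.mpr (hidx j k h))]
    have hLeval_self : ∀ j, MvPolynomial.eval (z j) (L j) = 1 := by
      intro j
      rw [hL]
      simp only [map_prod]
      exact Finset.prod_eq_one fun k _ => hgeval_self j k
    have hLeval_ne : ∀ j m, m ≠ j → MvPolynomial.eval (z m) (L j) = 0 := by
      intro j m hm
      rw [hL, map_prod]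
      apply Finset.prod_eq_zero (Finset.mem_erase.mpr ⟨hm, Finset.mem_univ m⟩)
      rw [hg]
      simp only [dif_neg (Ne.symm hm), hf, map_mul, map_sub, MvPolynomial.eval_C,
        MvPolynomial.eval_X]
      simp
    set J := Ideal.span {p : MvPolynomial (Fin d) ℂ |
        (∀ i, p.degreeOf i ≤ n) ∧ ∀ j, MvPolynomial.eval (z j) p = 0} with hJ
    -- key generator memberships
    have hMpos : ∀ _j : Fin M, 1 ≤ M := fun j => j.pos
    have hgen : ∀ (j : Fin M) (i : Fin d),
        (MvPolynomial.X i - MvPolynomial.C (z j i)) * L j ∈ J := by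
      intro j i
      apply Ideal.subset_span
      constructor
      · intro i'
        calc ((MvPolynomial.X i - MvPolynomial.C (z j i)) * L j).degreeOf i'
            ≤ ((MvPolynomial.X i - MvPolynomial.C (z j i)) * L j).totalDegree :=
              MvPolynomial.degreeOf_le_totalDegree _ _
          _ ≤ (MvPolynomial.X (R := ℂ) i - MvPolynomial.C (z j i)).totalDegree +
                (L j).totalDegree := MvPolynomial.totalDegree_mul _ _
          _ ≤ 1 + (M - 1) := add_le_add (hXC _ _) (hLdeg j)
          _ ≤ n := by have := hMpos j; omega
      · intro m
        rcases eq_or_ne m j with rfl | hm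
        · simp
        · rw [map_mul, hLeval_ne j m hm, mul_zero]
    have h1mem : (1 : MvPolynomial (Fin d) ℂ) - ∑ j, L j ∈ J := by
      apply Ideal.subset_span
      constructor
      · intro i
        calc ((1 : MvPolynomial (Fin d) ℂ) - ∑ j, L j).degreeOf i
            ≤ ((1 : MvPolynomial (Fin d) ℂ) - ∑ j, L j).totalDegree :=
              MvPolynomial.degreeOf_le_totalDegree _ _
          _ ≤ max (1 : MvPolynomial (Fin d) ℂ).totalDegree
                (-(∑ j, L j) : MvPolynomial (Fin d) ℂ).totalDegree := by
              rw [sub_eq_add_neg]; exact MvPolynomial.totalDegree_add _ _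
          _ ≤ n := by
              apply max_le
              · simp
              · rw [MvPolynomial.totalDegree_neg]
                refine le_trans (MvPolynomial.totalDegree_finset_sum _ _) ?_
                apply Finset.sup_le
                intro j _
                exact le_trans (hLdeg j) (by omega)
      · intro m
        rw [map_sub, map_one, map_sum]
        rw [Finset.sum_eq_single m (fun j _ hj => hLeval_ne j m (Ne.symm hj))
          (fun h => absurd (Finset.mem_univ m) h)]
        rw [hLeval_self m, sub_self]
    -- reduction lemma
    have hmul : ∀ (j : Fin M) (p : MvPolynomial (Fin d) ℂ),
        p * L j - MvPolynomial.C (MvPolynomial.eval (z j) p) * L j ∈ J := by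
      intro j p
      induction p using MvPolynomial.induction_on with
      | C a => simp
      | add p q hp hq =>
        have : (p + q) * L j - MvPolynomial.C (MvPolynomial.eval (z j) (p + q)) * L j =
            (p * L j - MvPolynomial.C (MvPolynomial.eval (z j) p) * L j) +
            (q * L j - MvPolynomial.C (MvPolynomial.eval (z j) q) * L j) := by
          rw [map_add, map_add]; ring
        rw [this]; exact Ideal.add_mem _ hp hq
      | mul_X p i hp =>
        have : p * MvPolynomial.X i * L j -
              MvPolynomial.C (MvPolynomial.eval (z j) (p * MvPolynomial.X i)) * L j =
            MvPolynomial.X i *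
              (p * L j - MvPolynomial.C (MvPolynomial.eval (z j) p) * L j) +
            MvPolynomial.C (MvPolynomial.eval (z j) p) *
              ((MvPolynomial.X i - MvPolynomial.C (z j i)) * L j) := by
          rw [map_mul, MvPolynomial.eval_X, map_mul]; ring
        rw [this]
        exact Ideal.add_mem _ (Ideal.mul_mem_left _ _ hp)
          (Ideal.mul_mem_left _ _ (hgen j i))
    -- conclude
    intro p hp
    rw [MvPolynomial.mem_vanishingIdeal_iff] at hp
    have he : ∀ j, MvPolynomial.eval (z j) p = 0 := fun j => hp _ ⟨j, rfl⟩
    have hpeq : p = p * (1 - ∑ j, L j) +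
        ∑ j, (p * L j - MvPolynomial.C (MvPolynomial.eval (z j) p) * L j) := by
      simp only [he, map_zero, zero_mul, sub_zero]
      rw [← Finset.mul_sum]
      ring
    rw [hpeq]
    exact Ideal.add_mem _ (Ideal.mul_mem_left _ _ h1mem)
      (Ideal.sum_mem _ fun j _ => hmul j p)
end
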